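/- Let $T_X$ be the Lie transform operator generated by a sequence $X$ of polynomial vector fields (acting on formal power series as a graded operator). Then $T_X$ is an algebra homomorphism: for any two formal power series $f$ and $g$, $T_X(fg) = (T_X f)(T_X g)$, where the identity holds order by order in the grading; equivalently, for every $s \ge 0$, $E_s^X(fg) = \sum_{m+l=s} (E_m^X f)(E_l^X g)$. -/

import Mathlib

open Finset

/-- The Lie derivative of a function along a polynomial vector field. -/
noncomputable def lieV {σ : Type*} [Fintype σ] [DecidableEq σ]
    (V : σ → MvPolynomial σ ℂ) (f : MvPolynomial σ ℂ) : MvPolynomial σ ℂ :=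
  ∑ l, V l * MvPolynomial.pderiv l f

/-- The Lie transform operators `E_0 = id`, `E_s = ∑_{j=1}^s (j/s) L_j ∘ E_{s-j}`. -/
noncomputable def EopF {F : Type*} [AddCommGroup F] [Module ℂ F]
    (L : ℕ → (F → F)) : ℕ → (F → F)
  | 0 => id
  | s + 1 => ((s + 1 : ℕ) : ℂ)⁻¹ •
      ∑ j ∈ Finset.range (s + 1), (((j + 1 : ℕ) : ℂ)) • (L (j + 1) ∘ EopF L (s - j))
  decreasing_by exact Nat.lt_succ_of_le (Nat.sub_le s j)

open Finset

section aux

variable {σ : Type*} [Fintype σ] [DecidableEq σ]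

lemma lieV_add (V : σ → MvPolynomial σ ℂ) (f g : MvPolynomial σ ℂ) :
    lieV V (f + g) = lieV V f + lieV V g := by
  simp [lieV, mul_add, Finset.sum_add_distrib]

lemma lieV_zero (V : σ → MvPolynomial σ ℂ) : lieV V 0 = 0 := by simp [lieV]

lemma lieV_smul (V : σ → MvPolynomial σ ℂ) (c : ℂ) (f : MvPolynomial σ ℂ) :
    lieV V (c • f) = c • lieV V f := by
  simp [lieV, Finset.smul_sum, mul_smul_comm]

lemma lieV_sum {ι : Type*} (V : σ → MvPolynomial σ ℂ) (s : Finset ι)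
    (F : ι → MvPolynomial σ ℂ) :
    lieV V (∑ i ∈ s, F i) = ∑ i ∈ s, lieV V (F i) := by
  classical
  induction s using Finset.induction with
  | empty => simp [lieV_zero]
  | insert _ _ h ih => simp [Finset.sum_insert h, lieV_add, ih]

lemma lieV_mul (V : σ → MvPolynomial σ ℂ) (f g : MvPolynomial σ ℂ) :
    lieV V (f * g) = lieV V f * g + f * lieV V g := by
  simp only [lieV, MvPolynomial.pderiv_mul, mul_add, Finset.sum_add_distrib,
    Finset.sum_mul, Finset.mul_sum]
  congr 1
  · exact Finset.sum_congr rfl fun l _ => by ring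
  · exact Finset.sum_congr rfl fun l _ => by ring

end aux

section Eop

variable {F : Type*} [AddCommGroup F] [Module ℂ F]

lemma EopF_succ_smul (L : ℕ → (F → F)) (s : ℕ) (f : F) :
    ((s + 1 : ℕ) : ℂ) • EopF L (s + 1) f =
      ∑ j ∈ Finset.range (s + 1), ((j + 1 : ℕ) : ℂ) • L (j + 1) (EopF L (s - j) f) := by
  rw [show EopF L (s+1) = ((s + 1 : ℕ) : ℂ)⁻¹ •
      ∑ j ∈ Finset.range (s + 1), (((j + 1 : ℕ) : ℂ)) • (L (j + 1) ∘ EopF L (s - j))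
    from by rw [EopF]]
  have hne : ((s : ℂ) + 1) ≠ 0 := by
    have := Nat.cast_add_one_ne_zero (R := ℂ) s; exact_mod_cast this
  simp [Pi.smul_apply, Finset.sum_apply, smul_smul, Function.comp]
  rw [mul_inv_cancel₀ hne, one_smul]

end Eop

section tri

variable {M : Type*} [AddCommMonoid M]

lemma tri_swap (n : ℕ) (H : ℕ → ℕ → M) :
    ∑ m ∈ range (n+1), ∑ j ∈ range (n-m), H m j
      = ∑ j ∈ range n, ∑ m ∈ range (n-j), H m j := by
  rw [Finset.sum_sigma', Finset.sum_sigma']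
  refine Finset.sum_nbij' (fun p => ⟨p.2, p.1⟩) (fun p => ⟨p.2, p.1⟩) ?_ ?_ ?_ ?_ ?_ <;>
    rintro ⟨a, b⟩ h <;> simp_all <;> omega

lemma tri_reindex (n : ℕ) (F : ℕ → ℕ → ℕ → M) :
    ∑ m ∈ range (n+1), ∑ j ∈ range m, F j (m-1-j) (n-m)
      = ∑ j ∈ range n, ∑ m ∈ range (n-j), F j m (n-1-j-m) := by
  rw [Finset.sum_sigma', Finset.sum_sigma']
  refine Finset.sum_nbij' (fun p => ⟨p.2, p.1 - 1 - p.2⟩) (fun p => ⟨p.1 + 1 + p.2, p.1⟩)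
    ?_ ?_ ?_ ?_ ?_ <;> rintro ⟨a, b⟩ h <;> simp_all <;> try omega
  · congr 1 <;> omega

end tri

lemma EopF_smul {F : Type*} [AddCommGroup F] [Module ℂ F] (L : ℕ → (F → F)) (m : ℕ) (f : F) :
    ((m : ℕ) : ℂ) • EopF L m f =
      ∑ j ∈ Finset.range m, ((j + 1 : ℕ) : ℂ) • L (j + 1) (EopF L (m - 1 - j) f) := by
  match m with
  | 0 => simp
  | s + 1 =>
    rw [EopF_succ_smul]
    exact Finset.sum_congr rfl fun j hj => by norm_num

section main

variable {A : Type*} [CommRing A] [Algebra ℂ A]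

lemma EopF_mul_general (L : ℕ → A → A)
    (hadd : ∀ i (f g : A), L i (f + g) = L i f + L i g)
    (hmul : ∀ i (f g : A), L i (f * g) = L i f * g + f * L i g) :
    ∀ (s : ℕ) (f g : A), EopF L s (f * g) =
      ∑ m ∈ range (s + 1), EopF L m f * EopF L (s - m) g := by
  have hzero : ∀ i, L i 0 = 0 := fun i => by
    have h := hadd i 0 0; simp only [add_zero] at h; linear_combination -h
  have hLsum : ∀ i (t : Finset ℕ) (F : ℕ → A),
      L i (∑ m ∈ t, F m) = ∑ m ∈ t, L i (F m) := by
    intro i t F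
    classical
    induction t using Finset.induction with
    | empty => simpa using hzero i
    | insert _ _ h ih => simp [Finset.sum_insert h, hadd, ih]
  intro s
  induction s using Nat.strong_induction_on with
  | _ s ih =>
    match s, ih with
    | 0, _ => intro f g; simp [EopF]
    | s + 1, ih =>
      intro f g
      have hne : ((s + 1 : ℕ) : ℂ) ≠ 0 := by
        have := Nat.cast_add_one_ne_zero (R := ℂ) s; exact_mod_cast this
      apply smul_right_injective A hne
      show ((s+1:ℕ):ℂ) • EopF L (s+1) (f*g)
        = ((s+1:ℕ):ℂ) • ∑ m ∈ range (s+1+1), EopF L m f * EopF L (s+1-m) g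
      rw [EopF_succ_smul]
      have lhs_eq : ∑ j ∈ range (s+1), ((j+1:ℕ):ℂ) • L (j+1) (EopF L (s-j) (f*g))
          = (∑ j ∈ range (s+1), ∑ m ∈ range (s+1-j),
              ((j+1:ℕ):ℂ) • (L (j+1) (EopF L m f) * EopF L (s-j-m) g))
            + ∑ j ∈ range (s+1), ∑ m ∈ range (s+1-j),
              ((j+1:ℕ):ℂ) • (EopF L m f * L (j+1) (EopF L (s-j-m) g)) := by
        rw [← Finset.sum_add_distrib]
        refine Finset.sum_congr rfl fun j hj => ?_
        simp only [Finset.mem_range] at hj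
        have hlt : s - j < s + 1 := by omega
        rw [ih (s - j) hlt f g]
        have h1 : s - j + 1 = s + 1 - j := by omega
        rw [h1, hLsum, Finset.smul_sum, ← Finset.sum_add_distrib]
        refine Finset.sum_congr rfl fun m hm => ?_
        rw [hmul, smul_add]
      rw [lhs_eq, Finset.smul_sum]
      have rhs_eq : ∀ m ∈ range (s+2),
          ((s+1:ℕ):ℂ) • (EopF L m f * EopF L (s+1-m) g)
          = (∑ j ∈ range m, ((j+1:ℕ):ℂ) • (L (j+1) (EopF L (m-1-j) f) * EopF L (s+1-m) g))
            + ∑ j ∈ range (s+1-m),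
                ((j+1:ℕ):ℂ) • (EopF L m f * L (j+1) (EopF L (s+1-m-1-j) g)) := by
        intro m hm
        simp only [Finset.mem_range] at hm
        have hcast : ((s+1:ℕ):ℂ) = ((m:ℕ):ℂ) + ((s+1-m:ℕ):ℂ) := by
          rw [← Nat.cast_add]; congr 1; omega
        rw [hcast, add_smul, ← smul_mul_assoc, ← mul_smul_comm,
          EopF_smul, EopF_smul, Finset.sum_mul, Finset.mul_sum]
        congr 1
        · exact Finset.sum_congr rfl fun j hj => (smul_mul_assoc _ _ _)
        · exact Finset.sum_congr rfl fun j hj => (mul_smul_comm _ _ _)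
      rw [Finset.sum_congr rfl rhs_eq, Finset.sum_add_distrib]
      rw [tri_reindex (s+1) (fun j a b => ((j+1:ℕ):ℂ) • (L (j+1) (EopF L a f) * EopF L b g))]
      rw [tri_swap (s+1) (fun m j => ((j+1:ℕ):ℂ) • (EopF L m f * L (j+1) (EopF L (s+1-m-1-j) g)))]
      congr 1
      refine Finset.sum_congr rfl fun j hj => Finset.sum_congr rfl fun m hm => ?_
      have h2 : s + 1 - m - 1 - j = s - j - m := by omega
      rw [h2]

end main


/-- the Lie transform is an algebra homomorphism order by order:
`E_s(fg) = ∑_{m+l=s} (E_m f)(E_l g)`. -/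
theorem lie_transform_algebra_homomorphism {σ : Type*} [Fintype σ] [DecidableEq σ]
    (X : ℕ → (σ → MvPolynomial σ ℂ))
    (hX : ∀ j, 1 ≤ j → ∀ l, (X j l).IsHomogeneous (j + 1)) :
    ∀ (s : ℕ) (f g : MvPolynomial σ ℂ),
      EopF (fun i => lieV (X i)) s (f * g) =
        ∑ m ∈ Finset.range (s + 1),
          EopF (fun i => lieV (X i)) m f * EopF (fun i => lieV (X i)) (s - m) g := by
  exact EopF_mul_general (fun i => lieV (X i))
    (fun i => lieV_add (X i)) (fun i => lieV_mul (X i))
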